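/- (Ohtsuka) Let X be a locally compact Hausdorff space, k : X × X → [0,∞] a lower semicontinuous symmetric kernel, L ⊆ X a nonempty set and K ⊆ X a nonempty compact set. Then the Chebyshev constant of K relative to L equals the dual energy: sup_{n≥1} M_n(L,K) = q̲(L,K). -/

import Mathlib

open MeasureTheory Set ENNReal Filter

variable {X : Type*}

/-- The potential `U^μ(x) = ∫ k(x,y) dμ(y)` of a measure `μ` with respect to the kernel `k`. -/
noncomputable def potential [MeasurableSpace X] (k : X → X → ℝ≥0∞) (μ : Measure X) (x : X) :
    ℝ≥0∞ :=
  ∫⁻ y, k x y ∂μ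

/-- `M1 H` : the regular Borel probability measures concentrated on `H`
(i.e. with outer measure of `H` equal to `1`). -/
def M1 [TopologicalSpace X] [MeasurableSpace X] (H : Set X) : Set (Measure X) :=
  {μ | IsProbabilityMeasure μ ∧ μ.Regular ∧ μ H = 1}

/-- `M1sharp H` : finite convex combinations of Dirac measures at points of `H`. -/
def M1sharp [MeasurableSpace X] (H : Set X) : Set (Measure X) :=
  {μ | ∃ (n : ℕ) (w : Fin n → X) (α : Fin n → ℝ≥0∞),
    (∀ j, w j ∈ H) ∧ (∑ j, α j = 1) ∧ μ = ∑ j, α j • Measure.dirac (w j)}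

/-- The quasi-uniform energy `q(H,L)`. -/
noncomputable def qEnergy [TopologicalSpace X] [MeasurableSpace X] (k : X → X → ℝ≥0∞)
    (H L : Set X) : ℝ≥0∞ :=
  ⨅ μ ∈ M1 H, ⨆ x ∈ L, potential k μ x

/-- The restricted quasi-uniform energy `q^#(H,L)`. -/
noncomputable def qEnergySharp [MeasurableSpace X] (k : X → X → ℝ≥0∞) (H L : Set X) : ℝ≥0∞ :=
  ⨅ μ ∈ M1sharp H, ⨆ x ∈ L, potential k μ x

/-- The dual energy `q̲(H,L)`. -/
noncomputable def qEnergyLow [TopologicalSpace X] [MeasurableSpace X] (k : X → X → ℝ≥0∞)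
    (H L : Set X) : ℝ≥0∞ :=
  ⨆ μ ∈ M1 H, ⨅ x ∈ L, potential k μ x

/-- The restricted dual energy `q̲^#(H,L)`. -/
noncomputable def qEnergyLowSharp [MeasurableSpace X] (k : X → X → ℝ≥0∞) (H L : Set X) : ℝ≥0∞ :=
  ⨆ μ ∈ M1sharp H, ⨅ x ∈ L, potential k μ x

/-- The `n`-th Chebyshev constant `M_n(H,L)`. -/
noncomputable def chebM (k : X → X → ℝ≥0∞) (H L : Set X) (n : ℕ) : ℝ≥0∞ :=
  ⨆ (w : Fin n → X) (_ : ∀ j, w j ∈ H), ⨅ x ∈ L, (∑ j, k x (w j)) / (n : ℝ≥0∞)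

/-- The `n`-th dual Chebyshev constant `M̄_n(H,L)`. -/
noncomputable def chebMbar (k : X → X → ℝ≥0∞) (H L : Set X) (n : ℕ) : ℝ≥0∞ :=
  ⨅ (w : Fin n → X) (_ : ∀ j, w j ∈ H), ⨆ x ∈ L, (∑ j, k x (w j)) / (n : ℝ≥0∞)

/-- The `n`-th diameter `D_n(H)`. -/
noncomputable def diamN (k : X → X → ℝ≥0∞) (H : Set X) (n : ℕ) : ℝ≥0∞ :=
  ⨅ (w : Fin n → X) (_ : ∀ j, w j ∈ H),
    (2 * ∑ p ∈ Finset.univ.filter (fun p : Fin n × Fin n => p.1 < p.2), k (w p.1) (w p.2)) /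
      ((n : ℝ≥0∞) * ((n : ℝ≥0∞) - 1))

/-- The `n`-th rendezvous set `R_n(H,L)`. -/
noncomputable def rendezvousN (k : X → X → ℝ≥0∞) (H L : Set X) (n : ℕ) : Set ℝ≥0∞ :=
  ⋂ (w : Fin n → X) (_ : ∀ j, w j ∈ H),
    Icc (⨅ x ∈ L, (∑ j, k x (w j)) / (n : ℝ≥0∞)) (⨆ x ∈ L, (∑ j, k x (w j)) / (n : ℝ≥0∞))

/-- The rendezvous set `R(H,L) = ⋂_{n ≥ 1} R_n(H,L)`. -/
noncomputable def rendezvous (k : X → X → ℝ≥0∞) (H L : Set X) : Set ℝ≥0∞ :=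
  ⋂ n : ℕ, rendezvousN k H L (n + 1)

/-- The average set `A(H,L)`. -/
noncomputable def averageSet [TopologicalSpace X] [MeasurableSpace X] (k : X → X → ℝ≥0∞)
    (H L : Set X) : Set ℝ≥0∞ :=
  ⋂ μ ∈ M1 H, Icc (⨅ x ∈ L, potential k μ x) (⨆ x ∈ L, potential k μ x)


section OhtsukaAux
open NNReal
variable {X : Type*} [TopologicalSpace X] [MeasurableSpace X] [BorelSpace X] [T2Space X]


lemma regular_dirac (x : X) : (Measure.dirac x).Regular := by
  have houter : (Measure.dirac x).OuterRegular := by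
    constructor
    intro A hA r hr
    by_cases hx : x ∈ A
    · refine ⟨univ, subset_univ _, isOpen_univ, ?_⟩
      have : Measure.dirac x A = 1 := Measure.dirac_apply_of_mem hx
      simpa [this] using hr
    · refine ⟨{x}ᶜ, subset_compl_singleton_iff.mpr hx, isClosed_singleton.isOpen_compl, ?_⟩
      have h0 : Measure.dirac x A = 0 := by
        rw [Measure.dirac_apply' _ hA]; simp [hx]
      have h1 : Measure.dirac x {x}ᶜ = 0 := by
        rw [Measure.dirac_apply' _ (MeasurableSet.compl (measurableSet_singleton x))]; simp
      rw [h1]; rw [h0] at hr; exact hr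
  refine { toIsFiniteMeasureOnCompacts := inferInstance,
           toOuterRegular := houter, innerRegular := ?_ }
  intro U hU r hr
  by_cases hx : x ∈ U
  · refine ⟨{x}, singleton_subset_iff.mpr hx, isCompact_singleton, ?_⟩
    have h1 : Measure.dirac x {x} = 1 := Measure.dirac_apply_of_mem rfl
    calc r < Measure.dirac x U := hr
      _ ≤ 1 := prob_le_one
      _ = _ := h1.symm
  · exfalso
    have h0 : Measure.dirac x U = 0 := by
      rw [Measure.dirac_apply' _ hU.measurableSet]; simp [hx]
    rw [h0] at hr
    exact (not_lt_of_ge (zero_le : 0 ≤ r)) hr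

lemma regular_add (μ ν : Measure X) [IsFiniteMeasure μ] [IsFiniteMeasure ν]
    (hμ : μ.Regular) (hν : ν.Regular) : (μ + ν).Regular := by
  have houter : (μ + ν).OuterRegular := by
    constructor
    intro A hA r hr
    rw [Measure.add_apply] at hr
    obtain ⟨ε, hε0, hε⟩ := ENNReal.lt_iff_exists_add_pos_lt.mp hr
    have hε2 : (ε : ℝ≥0∞) / 2 ≠ 0 := by
      simp [ENNReal.div_eq_zero_iff, (by exact_mod_cast hε0.ne' : (ε:ℝ≥0∞) ≠ 0)]
    obtain ⟨U₁, hAU₁, hU₁, hμU₁⟩ := Set.exists_isOpen_lt_add A (measure_ne_top μ A) hε2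
    obtain ⟨U₂, hAU₂, hU₂, hνU₂⟩ := Set.exists_isOpen_lt_add A (measure_ne_top ν A) hε2
    refine ⟨U₁ ∩ U₂, subset_inter hAU₁ hAU₂, hU₁.inter hU₂, ?_⟩
    rw [Measure.add_apply]
    calc μ (U₁ ∩ U₂) + ν (U₁ ∩ U₂) ≤ μ U₁ + ν U₂ :=
          add_le_add (measure_mono inter_subset_left) (measure_mono inter_subset_right)
      _ < (μ A + ε/2) + (ν A + ε/2) := ENNReal.add_lt_add hμU₁ hνU₂
      _ = μ A + ν A + ε := by rw [add_add_add_comm, ENNReal.add_halves]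
      _ < r := hε
  refine { toIsFiniteMeasureOnCompacts := inferInstance,
           toOuterRegular := houter, innerRegular := ?_ }
  intro U hU r hr
  rw [Measure.add_apply] at hr
  obtain ⟨ε, hε0, hε⟩ := ENNReal.lt_iff_exists_add_pos_lt.mp hr
  have hε2 : (ε : ℝ≥0∞) / 2 ≠ 0 := by
    simp [ENNReal.div_eq_zero_iff, (by exact_mod_cast hε0.ne' : (ε:ℝ≥0∞) ≠ 0)]
  obtain ⟨K₁, hK₁U, hK₁, hμK₁⟩ :=
    hU.measurableSet.exists_isCompact_lt_add (μ := μ) (measure_ne_top μ U) hε2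
  obtain ⟨K₂, hK₂U, hK₂, hνK₂⟩ :=
    hU.measurableSet.exists_isCompact_lt_add (μ := ν) (measure_ne_top ν U) hε2
  refine ⟨K₁ ∪ K₂, union_subset hK₁U hK₂U, hK₁.union hK₂, ?_⟩
  rw [Measure.add_apply]
  have h1 : r + ε < (μ K₁ + ε/2) + (ν K₂ + ε/2) := lt_of_lt_of_le hε
    (add_le_add hμK₁.le hνK₂.le)
  have h2 : r + ε < (μ K₁ + ν K₂) + ε := by
    rw [add_add_add_comm, ENNReal.add_halves] at h1; exact h1
  have h3 : r < μ K₁ + ν K₂ := (ENNReal.add_lt_add_iff_right (by simp)).mp h2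
  exact h3.trans_le (add_le_add (measure_mono subset_union_left)
    (measure_mono subset_union_right))

lemma regular_sum {ι : Type*} (s : Finset ι) (μ : ι → Measure X)
    (hreg : ∀ i ∈ s, (μ i).Regular) (hfin : ∀ i ∈ s, IsFiniteMeasure (μ i)) :
    (∑ i ∈ s, μ i).Regular := by
  classical
  induction s using Finset.induction_on with
  | empty => simpa using Measure.Regular.zero
  | @insert a t hnot ih =>
    rw [Finset.sum_insert hnot]
    have h1 : IsFiniteMeasure (μ a) := hfin a (Finset.mem_insert_self _ _)
    have h2 : IsFiniteMeasure (∑ i ∈ t, μ i) := by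
      constructor
      rw [Measure.finset_sum_apply]
      exact ENNReal.sum_lt_top.mpr fun i hi =>
        (hfin i (Finset.mem_insert_of_mem hi)).measure_univ_lt_top
    exact regular_add _ _ (hreg a (Finset.mem_insert_self _ _))
      (ih (fun i hi => hreg i (Finset.mem_insert_of_mem hi))
        (fun i hi => hfin i (Finset.mem_insert_of_mem hi)))

lemma lsc_section {k : X → X → ℝ≥0∞} (hk : LowerSemicontinuous fun p : X × X => k p.1 p.2)
    (x : X) : LowerSemicontinuous (k x) := by
  rw [lowerSemicontinuous_iff_isOpen_preimage] at hk ⊢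
  intro c
  have : (k x) ⁻¹' Ioi c = (fun y => (x, y)) ⁻¹' ((fun p : X × X => k p.1 p.2) ⁻¹' Ioi c) := rfl
  rw [this]
  exact (hk c).preimage (Continuous.prodMk_right x)

lemma meas_section {k : X → X → ℝ≥0∞} (hk : LowerSemicontinuous fun p : X × X => k p.1 p.2)
    (x : X) : Measurable (k x) :=
  (lsc_section hk x).measurable

/-- The discrete measure attached to an `n`-tuple of points. -/
noncomputable def discMeas {n : ℕ} (w : Fin n → X) : Measure X :=
  ∑ j : Fin n, ((n : ℝ≥0∞))⁻¹ • Measure.dirac (w j)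

lemma discMeas_apply {n : ℕ} (w : Fin n → X) (s : Set X) :
    discMeas w s = ∑ j : Fin n, ((n : ℝ≥0∞))⁻¹ * Measure.dirac (w j) s := by
  rw [discMeas, Measure.finset_sum_apply]
  simp [Measure.smul_apply]

lemma discMeas_isProb {n : ℕ} (hn : n ≠ 0) (w : Fin n → X) :
    IsProbabilityMeasure (discMeas w) := by
  constructor
  rw [discMeas_apply]
  have hne : (n : ℝ≥0∞) ≠ 0 := by exact_mod_cast hn
  simp [Finset.sum_const, ENNReal.mul_inv_cancel hne (by simp)]

lemma discMeas_mem_M1 {n : ℕ} (hn : n ≠ 0) {L : Set X} (w : Fin n → X) (hw : ∀ j, w j ∈ L) :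
    discMeas w ∈ M1 L := by
  have hne : (n : ℝ≥0∞) ≠ 0 := by exact_mod_cast hn
  refine ⟨discMeas_isProb hn w, ?_, ?_⟩
  · refine regular_sum _ _ (fun j _ => ?_) (fun j _ => ?_)
    · haveI := regular_dirac (w j)
      exact Measure.Regular.smul (ENNReal.inv_ne_top.mpr hne)
    · constructor
      rw [Measure.smul_apply, smul_eq_mul]
      exact ENNReal.mul_lt_top (ENNReal.inv_lt_top.mpr (by positivity)) (by simp)
  · rw [discMeas_apply]
    have : ∀ j : Fin n, Measure.dirac (w j) L = 1 := fun j => Measure.dirac_apply_of_mem (hw j)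
    simp [this, Finset.sum_const, ENNReal.mul_inv_cancel hne (by simp)]

lemma potential_discMeas {k : X → X → ℝ≥0∞}
    (hk : LowerSemicontinuous fun p : X × X => k p.1 p.2) {n : ℕ} (w : Fin n → X) (x : X) :
    potential k (discMeas w) x = (∑ j, k x (w j)) / (n : ℝ≥0∞) := by
  rw [potential, discMeas, lintegral_finset_sum_measure]
  have : ∀ j : Fin n, ∫⁻ y, k x y ∂(((n : ℝ≥0∞))⁻¹ • Measure.dirac (w j))
      = ((n : ℝ≥0∞))⁻¹ * k x (w j) := by
    intro j
    rw [lintegral_smul_measure, lintegral_dirac' _ (meas_section hk x), smul_eq_mul]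
  rw [Finset.sum_congr rfl fun j _ => this j, ← Finset.mul_sum, div_eq_mul_inv, mul_comm]

lemma cheb_le_qLow {k : X → X → ℝ≥0∞}
    (hk : LowerSemicontinuous fun p : X × X => k p.1 p.2) (L K : Set X) (n : ℕ) :
    chebM k L K (n + 1) ≤ qEnergyLow k L K := by
  refine iSup_le fun w => iSup_le fun hw => ?_
  have hmem : discMeas w ∈ M1 L := discMeas_mem_M1 (Nat.succ_ne_zero n) w hw
  refine le_trans ?_ (le_iSup₂ (f := fun μ (_ : μ ∈ M1 L) => ⨅ x ∈ K, potential k μ x)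
    (discMeas w) hmem)
  exact le_iInf₂ fun x hx => by
    rw [potential_discMeas hk]
    exact iInf₂_le x hx

lemma exists_theta {c T : ℝ≥0∞} (h : c < T) (hT : T ≠ ⊤) :
    ∃ θ : ℝ≥0∞, θ < 1 ∧ c < θ * T := by
  have hT0 : T ≠ 0 := fun h0 => by simp [h0] at h
  obtain ⟨b, hcb, hbT⟩ := exists_between h
  refine ⟨b / T, ?_, ?_⟩
  · rw [ENNReal.div_lt_iff (Or.inl hT0) (Or.inl hT), one_mul]
    exact hbT
  · rwa [ENNReal.div_mul_cancel hT0 hT]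

lemma gadget {k : X → X → ℝ≥0∞} (hk : LowerSemicontinuous fun p : X × X => k p.1 p.2)
    {μ : Measure X} [IsProbabilityMeasure μ] [μ.InnerRegularCompactLTTop]
    {L : Set X} (hL : μ (closure L) = 1)
    {c : ℝ≥0∞} (x : X) (hx : c < ∫⁻ y, k x y ∂μ) :
    ∃ (V : Set X) (R : Finset ℝ≥0) (v : ℝ≥0 → ℝ≥0∞) (C W : ℝ≥0 → Set X),
      IsOpen V ∧ x ∈ V ∧
      (∀ s ∈ R, IsCompact (C s)) ∧
      (∀ s ∈ R, C s ⊆ closure L) ∧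
      (∀ s ∈ R, IsOpen (W s)) ∧
      (∀ s ∈ R, C s ⊆ W s) ∧
      (∀ s ∈ R, v s ≠ ⊤) ∧
      ((R : Set ℝ≥0).Pairwise fun s t => Disjoint (C s) (C t)) ∧
      (∀ s ∈ R, ∀ x' ∈ V, ∀ y ∈ W s, v s ≤ k x' y) ∧
      c < ∑ s ∈ R, v s * μ (C s) := by
  classical
  rw [lintegral_eq_nnreal] at hx
  rw [lt_iSup_iff] at hx
  obtain ⟨φ, hx⟩ := hx
  rw [lt_iSup_iff] at hx
  obtain ⟨hφ, hx⟩ := hx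
  rw [SimpleFunc.map_lintegral] at hx
  set Lb := closure L with hLb
  have hLbm : MeasurableSet Lb := isClosed_closure.measurableSet
  have hLbc : μ Lbᶜ = 0 := by
    have := measure_compl hLbm (measure_ne_top μ _)
    rw [hL] at this
    simpa [measure_univ] using this
  set R : Finset ℝ≥0 := φ.range.filter (fun s => s ≠ 0) with hR
  set A : ℝ≥0 → Set X := fun s => φ ⁻¹' {s} ∩ Lb with hA
  have hAmeas : ∀ s, MeasurableSet (A s) := fun s => (φ.measurableSet_preimage {s}).inter hLbm
  have hT : c < ∑ s ∈ R, (s : ℝ≥0∞) * μ (A s) := by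
    have : ∀ s, μ (A s) = μ (φ ⁻¹' {s}) := fun s => measure_inter_conull hLbc
    calc c < ∑ s ∈ φ.range, (s : ℝ≥0∞) * μ (φ ⁻¹' {s}) := hx
      _ = ∑ s ∈ R, (s : ℝ≥0∞) * μ (φ ⁻¹' {s}) := by
          rw [hR]
          refine (Finset.sum_filter_of_ne fun s _ h => ?_).symm
          intro h0; rw [h0] at h; simp at h
      _ = ∑ s ∈ R, (s : ℝ≥0∞) * μ (A s) := by
          exact Finset.sum_congr rfl fun s _ => by rw [this]
  have hTne : (∑ s ∈ R, (s : ℝ≥0∞) * μ (A s)) ≠ ⊤ :=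
    (ENNReal.sum_lt_top.mpr fun s _ => ENNReal.mul_lt_top coe_lt_top
      (measure_lt_top μ _)).ne
  obtain ⟨θ, hθ1, hθ⟩ := exists_theta hT hTne
  have hθne : θ ≠ ⊤ := hθ1.ne_top
  obtain ⟨ε, hε0, hεlt⟩ := ENNReal.lt_iff_exists_add_pos_lt.mp hθ
  set D : ℝ≥0∞ := ∑ s ∈ R, (s : ℝ≥0∞) with hD
  have hDne : D + 1 ≠ ⊤ := by
    refine ENNReal.add_ne_top.mpr ⟨?_, one_ne_top⟩
    exact (ENNReal.sum_lt_top.mpr fun s _ => coe_lt_top).ne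
  set δ : ℝ≥0∞ := (ε : ℝ≥0∞) / (D + 1) with hδ
  have hδ0 : δ ≠ 0 := by
    rw [hδ]
    simp only [ne_eq, ENNReal.div_eq_zero_iff]
    push_neg
    exact ⟨by exact_mod_cast hε0.ne', hDne⟩
  -- compacts
  have hCex : ∀ s ∈ R, ∃ C : Set X, C ⊆ A s ∧ IsCompact C ∧ μ (A s) < μ C + δ :=
    fun s _ => (hAmeas s).exists_isCompact_lt_add (measure_ne_top μ _) hδ0
  choose! C hCA hCcomp hCμ using hCex
  -- main numeric estimate
  have hsum : c < ∑ s ∈ R, (θ * s) * μ (C s) := by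
    have step1 : ∑ s ∈ R, θ * ((s:ℝ≥0∞) * μ (A s)) ≤ (∑ s ∈ R, (θ * s) * μ (C s)) + ε := by
      calc ∑ s ∈ R, θ * ((s:ℝ≥0∞) * μ (A s))
          ≤ ∑ s ∈ R, ((θ * s) * μ (C s) + (s:ℝ≥0∞) * δ) := by
            refine Finset.sum_le_sum fun s hs => ?_
            calc θ * ((s:ℝ≥0∞) * μ (A s)) ≤ θ * ((s:ℝ≥0∞) * (μ (C s) + δ)) :=
                  mul_le_mul_right (mul_le_mul_right (hCμ s hs).le _) _
              _ = (θ * s) * μ (C s) + θ * ((s:ℝ≥0∞) * δ) := by ring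
              _ ≤ (θ * s) * μ (C s) + 1 * ((s:ℝ≥0∞) * δ) :=
                  add_le_add le_rfl (mul_le_mul_left hθ1.le _)
              _ = (θ * s) * μ (C s) + (s:ℝ≥0∞) * δ := by rw [one_mul]
        _ = (∑ s ∈ R, (θ * s) * μ (C s)) + D * δ := by
            rw [Finset.sum_add_distrib, hD, Finset.sum_mul]
        _ ≤ (∑ s ∈ R, (θ * s) * μ (C s)) + ε := by
            gcongr
            rw [hδ]
            calc D * ((ε:ℝ≥0∞) / (D+1)) ≤ (D+1) * ((ε:ℝ≥0∞)/(D+1)) := by gcongr; simp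
              _ = ε := ENNReal.mul_div_cancel (by simp) hDne
    have hθT : θ * ∑ s ∈ R, (s:ℝ≥0∞) * μ (A s) = ∑ s ∈ R, θ * ((s:ℝ≥0∞) * μ (A s)) :=
      Finset.mul_sum _ _ _
    have step0 : c + ε < (∑ s ∈ R, (θ * s) * μ (C s)) + ε :=
      hεlt.trans_le (le_trans (le_of_eq hθT) step1)
    exact (ENNReal.add_lt_add_iff_right coe_ne_top).mp step0
  -- tube lemma
  have htube : ∀ s ∈ R, ∃ (U W : Set X), IsOpen U ∧ IsOpen W ∧ x ∈ U ∧ C s ⊆ W ∧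
      ∀ x' ∈ U, ∀ y ∈ W, θ * s ≤ k x' y := by
    intro s hs
    have hslt : θ * (s:ℝ≥0∞) < s := by
      have hs0 : (s:ℝ≥0∞) ≠ 0 := by
        have := (Finset.mem_filter.mp hs).2
        exact_mod_cast this
      calc θ * (s:ℝ≥0∞) < 1 * s := by
            rw [ENNReal.mul_lt_mul_iff_left hs0 coe_ne_top]; exact hθ1
        _ = s := one_mul _
    have hopen : IsOpen {p : X × X | θ * s < k p.1 p.2} := hk.isOpen_preimage _
    have hsub : {x} ×ˢ C s ⊆ {p : X × X | θ * s < k p.1 p.2} := by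
      rintro ⟨x', y⟩ ⟨hx', hy⟩
      simp only [mem_singleton_iff] at hx'
      show θ * (s:ℝ≥0∞) < k x' y
      rw [hx']
      have hyA : y ∈ A s := hCA s hs hy
      have : φ y = s := by
        have := hyA.1
        simpa using this
      have hky : (s : ℝ≥0∞) ≤ k x y := by
        have h2 := hφ y
        rw [this] at h2
        exact h2
      exact lt_of_lt_of_le hslt hky
    obtain ⟨U, W, hU, hW, hxU, hCW, hUW⟩ :=
      generalized_tube_lemma isCompact_singleton (hCcomp s hs) hopen hsub
    exact ⟨U, W, hU, hW, hxU (mem_singleton x), hCW,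
      fun x' hx' y hy => (hUW (mk_mem_prod hx' hy)).le⟩
  choose! U W hUopen hWopen hxU hCW hUW using htube
  refine ⟨⋂ s ∈ R, U s, R, fun s => θ * s, C, W, ?_, ?_, hCcomp, ?_, hWopen, hCW, ?_, ?_, ?_, hsum⟩
  · exact isOpen_biInter_finset hUopen
  · exact mem_iInter₂.mpr hxU
  · exact fun s hs => (hCA s hs).trans inter_subset_right
  · intro s _; exact ENNReal.mul_ne_top hθne coe_ne_top
  · -- pairwise disjoint
    intro s hs t ht hst
    have : Disjoint (φ ⁻¹' {s}) (φ ⁻¹' {t}) := by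
      refine Set.disjoint_left.mpr fun y hys hyt => ?_
      simp only [mem_preimage, mem_singleton_iff] at hys hyt
      exact hst (hys ▸ hyt ▸ rfl)
    exact this.mono ((hCA s hs).trans inter_subset_left) ((hCA t ht).trans inter_subset_left)
  · intro s hs x' hx' y hy
    exact hUW s hs x' (mem_iInter₂.mp hx' s hs) y hy

lemma qLow_le_sup_cheb {k : X → X → ℝ≥0∞}
    (hk : LowerSemicontinuous fun p : X × X => k p.1 p.2)
    (L K : Set X) (hLne : L.Nonempty) (hK : IsCompact K) (hKne : K.Nonempty)
    (μ : Measure X) (hμ : μ ∈ M1 L) :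
    (⨅ x ∈ K, potential k μ x) ≤ ⨆ n : ℕ, chebM k L K (n + 1) := by
  classical
  obtain ⟨hprob, hreg, hμL⟩ := hμ
  haveI := hprob
  haveI := hreg
  have hLb : μ (closure L) = 1 :=
    le_antisymm prob_le_one (hμL ▸ measure_mono subset_closure)
  refine le_of_forall_lt fun c hc => ?_
  obtain ⟨c', hcc', hc'inf⟩ := exists_between hc
  -- apply the gadget at every point of K
  have hgad := fun (x : X) (hx : x ∈ K) =>
    gadget hk hLb (c := c') x (by
      have := hc'inf.trans_le (iInf₂_le x hx)
      exact this)
  choose! V R v C W hVopen hxV hCcomp hCLb hWopen hCW hvne hdisj hbound hsumgt using hgad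
  -- finite subcover
  obtain ⟨b', hb'K, hb'fin, hb'cov⟩ := hK.elim_finite_subcover_image
    (fun x hx => hVopen x hx) (fun x hx => mem_biUnion hx (hxV x hx))
  set t : Finset X := hb'fin.toFinset with ht
  have htK : ∀ j ∈ t, j ∈ K := fun j hj => hb'K (hb'fin.mem_toFinset.mp hj)
  have hcov : ∀ x ∈ K, ∃ j ∈ t, x ∈ V j := by
    intro x hx
    obtain ⟨j, hj, hxj⟩ := mem_iUnion₂.mp (hb'cov hx)
    exact ⟨j, hb'fin.mem_toFinset.mpr hj, hxj⟩
  -- global index set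
  set 𝔄 : Finset (X × ℝ≥0) := t.biUnion (fun j => (R j).image (fun s => (j, s))) with h𝔄
  set CC : X × ℝ≥0 → Set X := fun a => C a.1 a.2 with hCC
  set vv : X × ℝ≥0 → ℝ≥0∞ := fun a => v a.1 a.2 with hvv
  set WW : X × ℝ≥0 → Set X := fun a => W a.1 a.2 with hWW
  have hmem𝔄 : ∀ a : X × ℝ≥0, a ∈ 𝔄 ↔ a.1 ∈ t ∧ a.2 ∈ R a.1 := by
    intro a
    constructor
    · intro ha
      obtain ⟨j, hj, hs⟩ := Finset.mem_biUnion.mp ha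
      obtain ⟨s, hsR, hpair⟩ := Finset.mem_image.mp hs
      rw [← hpair]
      exact ⟨hj, hsR⟩
    · rintro ⟨h1, h2⟩
      exact Finset.mem_biUnion.mpr ⟨a.1, h1, Finset.mem_image.mpr ⟨a.2, h2, rfl⟩⟩
  have hCCcomp : ∀ a ∈ 𝔄, IsCompact (CC a) := fun a ha =>
    hCcomp a.1 (htK a.1 ((hmem𝔄 a).mp ha).1) a.2 ((hmem𝔄 a).mp ha).2
  have hCCmeas : ∀ a ∈ 𝔄, MeasurableSet (CC a) := fun a ha =>
    (hCCcomp a ha).isClosed.measurableSet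
  have hCCLb : ∀ a ∈ 𝔄, CC a ⊆ closure L := fun a ha =>
    hCLb a.1 (htK a.1 ((hmem𝔄 a).mp ha).1) a.2 ((hmem𝔄 a).mp ha).2
  have hWWopen : ∀ a ∈ 𝔄, IsOpen (WW a) := fun a ha =>
    hWopen a.1 (htK a.1 ((hmem𝔄 a).mp ha).1) a.2 ((hmem𝔄 a).mp ha).2
  have hCCWW : ∀ a ∈ 𝔄, CC a ⊆ WW a := fun a ha =>
    hCW a.1 (htK a.1 ((hmem𝔄 a).mp ha).1) a.2 ((hmem𝔄 a).mp ha).2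
  have hvvne : ∀ a ∈ 𝔄, vv a ≠ ⊤ := fun a ha =>
    hvne a.1 (htK a.1 ((hmem𝔄 a).mp ha).1) a.2 ((hmem𝔄 a).mp ha).2
  set pow : Finset (Finset (X × ℝ≥0)) := 𝔄.powerset with hpow
  -- atoms
  set P : Finset (X × ℝ≥0) → Set X :=
    fun E => ⋂ a ∈ 𝔄, (if a ∈ E then CC a else (CC a)ᶜ) with hP
  have hPmem : ∀ (E : Finset (X × ℝ≥0)) (y : X),
      y ∈ P E ↔ ∀ a ∈ 𝔄, (a ∈ E → y ∈ CC a) ∧ (a ∉ E → y ∉ CC a) := by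
    intro E y
    rw [hP]
    simp only [mem_iInter₂]
    refine forall₂_congr fun a ha => ?_
    by_cases h : a ∈ E <;> simp [h]
  have hPmeas : ∀ E, MeasurableSet (P E) := by
    intro E
    rw [hP]
    refine MeasurableSet.biInter 𝔄.countable_toSet fun a ha => ?_
    by_cases h : a ∈ E <;> simp only [h, if_true, if_false]
    · exact hCCmeas a ha
    · exact (hCCmeas a ha).compl
  have hPdisj : ∀ E ∈ pow, ∀ E' ∈ pow, E ≠ E' → Disjoint (P E) (P E') := by
    intro E hE E' hE' hne
    refine Set.disjoint_left.mpr fun y hy hy' => hne ?_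
    have h1 := (hPmem E y).mp hy
    have h2 := (hPmem E' y).mp hy'
    ext a
    constructor
    · intro haE
      have ha𝔄 : a ∈ 𝔄 := Finset.mem_powerset.mp hE haE
      by_contra haE'
      exact (h2 a ha𝔄).2 haE' ((h1 a ha𝔄).1 haE)
    · intro haE'
      have ha𝔄 : a ∈ 𝔄 := Finset.mem_powerset.mp hE' haE'
      by_contra haE
      exact (h1 a ha𝔄).2 haE ((h2 a ha𝔄).1 haE')
  -- every point lies in the atom it generates
  have hPgen : ∀ y : X, y ∈ P (𝔄.filter (fun a => y ∈ CC a)) := by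
    intro y
    rw [hPmem]
    intro a ha
    constructor
    · intro haf
      exact (Finset.mem_filter.mp haf).2
    · intro haf hyC
      exact haf (Finset.mem_filter.mpr ⟨ha, hyC⟩)
  have hμCC : ∀ a ∈ 𝔄, μ (CC a) = ∑ E ∈ pow.filter (fun E => a ∈ E), μ (P E) := by
    intro a ha
    have hseteq : CC a = ⋃ E ∈ pow.filter (fun E => a ∈ E), P E := by
      ext y
      constructor
      · intro hy
        refine mem_biUnion (Finset.mem_filter.mpr ⟨Finset.mem_powerset.mpr (Finset.filter_subset _ _), Finset.mem_filter.mpr ⟨ha, hy⟩⟩) (hPgen y)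
      · intro hy
        obtain ⟨E, hE, hyE⟩ := mem_iUnion₂.mp hy
        exact ((hPmem E y).mp hyE a ha).1 (Finset.mem_filter.mp hE).2
    rw [hseteq, measure_biUnion_finset ?_ (fun E _ => hPmeas E)]
    intro E hE E' hE' hne
    exact hPdisj E (Finset.mem_filter.mp hE).1 E' (Finset.mem_filter.mp hE').1 hne
  have hsumP : ∑ E ∈ pow, μ (P E) ≤ 1 := by
    rw [← measure_biUnion_finset ?_ (fun E _ => hPmeas E)]
    · exact prob_le_one
    · intro E hE E' hE' hne
      exact hPdisj E hE E' hE' hne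
  -- choose representative points
  have hwex : ∀ E : Finset (X × ℝ≥0), ∃ z, z ∈ L ∧
      (E ∈ pow → (P E).Nonempty → ∀ a ∈ E, z ∈ WW a) := by
    intro E
    by_cases hEp : E ∈ pow ∧ (P E).Nonempty ∧ E.Nonempty
    · obtain ⟨hE, hPE, hEne⟩ := hEp
      obtain ⟨y₀, hy₀⟩ := hPE
      have hsubE : ∀ a ∈ E, a ∈ 𝔄 := fun a ha => Finset.mem_powerset.mp hE ha
      have hy₀C : ∀ a ∈ E, y₀ ∈ CC a := fun a ha =>
        ((hPmem E y₀).mp hy₀ a (hsubE a ha)).1 ha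
      obtain ⟨a₀, ha₀⟩ := hEne
      have hy₀Lb : y₀ ∈ closure L := hCCLb a₀ (hsubE a₀ ha₀) (hy₀C a₀ ha₀)
      have hOopen : IsOpen (⋂ a ∈ E, WW a) :=
        isOpen_biInter_finset fun a ha => hWWopen a (hsubE a ha)
      have hy₀O : y₀ ∈ ⋂ a ∈ E, WW a :=
        mem_iInter₂.mpr fun a ha => hCCWW a (hsubE a ha) (hy₀C a ha)
      obtain ⟨z, hzO, hzL⟩ := _root_.mem_closure_iff.mp hy₀Lb _ hOopen hy₀O
      exact ⟨z, hzL, fun _ _ a ha => mem_iInter₂.mp hzO a ha⟩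
    · refine ⟨hLne.choose, hLne.choose_spec, fun hE hPE a ha => ?_⟩
      exact (hEp ⟨hE, hPE, ⟨a, ha⟩⟩).elim
  choose! wE hwEL hwEW using hwex
  -- the per-patch value of an atom
  set gval : X → Finset (X × ℝ≥0) → ℝ≥0∞ :=
    fun j E => ∑ a ∈ E.filter (fun a => a.1 = j), vv a with hgval
  -- the main identity: for j ∈ t
  have hmain : ∀ j ∈ t, c' < ∑ E ∈ pow, μ (P E) * gval j E := by
    intro j hj
    have hfil : 𝔄.filter (fun a => a.1 = j) = (R j).image (fun s => (j, s)) := by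
      ext a
      simp only [Finset.mem_filter, Finset.mem_image, hmem𝔄]
      constructor
      · rintro ⟨⟨h1, h2⟩, h3⟩
        exact ⟨a.2, by rwa [h3] at h2, by rw [← h3]⟩
      · rintro ⟨s, hs, rfl⟩
        exact ⟨⟨hj, hs⟩, rfl⟩
    have step1 : ∑ s ∈ R j, v j s * μ (C j s) = ∑ a ∈ 𝔄.filter (fun a => a.1 = j), vv a * μ (CC a) := by
      rw [hfil, Finset.sum_image (fun s _ s' _ h => by injection h)]
    have step2 : ∑ a ∈ 𝔄.filter (fun a => a.1 = j), vv a * μ (CC a)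
        = ∑ E ∈ pow, μ (P E) * gval j E := by
      calc ∑ a ∈ 𝔄.filter (fun a => a.1 = j), vv a * μ (CC a)
          = ∑ a ∈ 𝔄.filter (fun a => a.1 = j), ∑ E ∈ pow.filter (fun E => a ∈ E), vv a * μ (P E) := by
            refine Finset.sum_congr rfl fun a ha => ?_
            rw [hμCC a (Finset.mem_filter.mp ha).1, Finset.mul_sum]
        _ = ∑ a ∈ 𝔄.filter (fun a => a.1 = j), ∑ E ∈ pow, if a ∈ E then vv a * μ (P E) else 0 := by
            refine Finset.sum_congr rfl fun a _ => ?_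
            rw [Finset.sum_filter]
        _ = ∑ E ∈ pow, ∑ a ∈ 𝔄.filter (fun a => a.1 = j), if a ∈ E then vv a * μ (P E) else 0 :=
            Finset.sum_comm
        _ = ∑ E ∈ pow, μ (P E) * gval j E := by
            refine Finset.sum_congr rfl fun E hE => ?_
            rw [← Finset.sum_filter]
            have : (𝔄.filter (fun a => a.1 = j)).filter (fun a => a ∈ E)
                = E.filter (fun a => a.1 = j) := by
              ext a
              simp only [Finset.mem_filter]
              constructor
              · rintro ⟨⟨_, h2⟩, h3⟩; exact ⟨h3, h2⟩
              · rintro ⟨h1, h2⟩; exact ⟨⟨Finset.mem_powerset.mp hE h1, h2⟩, h1⟩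
            rw [this, hgval, ← Finset.sum_mul, mul_comm]
    rw [← step2, ← step1]
    exact hsumgt j (htK j hj)
  -- the key pointwise bound
  have hkey : ∀ E ∈ pow, μ (P E) ≠ 0 → ∀ j ∈ t, ∀ x' ∈ V j, gval j E ≤ k x' (wE E) := by
    intro E hE hPne j hj x' hx'
    have hPnonempty : (P E).Nonempty := nonempty_of_measure_ne_zero hPne
    rcases (E.filter (fun a => a.1 = j)).eq_empty_or_nonempty with h0 | hne
    · show (∑ a ∈ E.filter (fun a => a.1 = j), vv a) ≤ k x' (wE E)
      simp [h0]
    · obtain ⟨a₀, ha₀⟩ := hne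
      have ha₀E : a₀ ∈ E := (Finset.mem_filter.mp ha₀).1
      have ha₀j : a₀.1 = j := (Finset.mem_filter.mp ha₀).2
      have hsubE : ∀ a ∈ E, a ∈ 𝔄 := fun a ha => Finset.mem_powerset.mp hE ha
      have hsingle : E.filter (fun a => a.1 = j) = {a₀} := by
        apply Finset.eq_singleton_iff_unique_mem.mpr
        refine ⟨ha₀, fun a ha => ?_⟩
        have haE : a ∈ E := (Finset.mem_filter.mp ha).1
        have haj : a.1 = j := (Finset.mem_filter.mp ha).2
        by_contra hne'
        have hsne : a.2 ≠ a₀.2 := by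
          intro h2
          exact hne' (Prod.ext (haj.trans ha₀j.symm) h2)
        obtain ⟨y₀, hy₀⟩ := hPnonempty
        have hy₀a : y₀ ∈ CC a := ((hPmem E y₀).mp hy₀ a (hsubE a haE)).1 haE
        have hy₀a₀ : y₀ ∈ CC a₀ := ((hPmem E y₀).mp hy₀ a₀ (hsubE a₀ ha₀E)).1 ha₀E
        have hdj := hdisj j (htK j hj)
          (show a.2 ∈ (R j : Set ℝ≥0) by
            have := ((hmem𝔄 a).mp (hsubE a haE)).2; rwa [haj] at this)
          (show a₀.2 ∈ (R j : Set ℝ≥0) by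
            have := ((hmem𝔄 a₀).mp (hsubE a₀ ha₀E)).2; rwa [ha₀j] at this)
          hsne
        have h1 : y₀ ∈ C a.1 a.2 := hy₀a
        have h2 : y₀ ∈ C a₀.1 a₀.2 := hy₀a₀
        rw [haj] at h1
        rw [ha₀j] at h2
        exact (hdj.ne_of_mem h1 h2) rfl
      show (∑ a ∈ E.filter (fun a => a.1 = j), vv a) ≤ k x' (wE E)
      rw [hsingle, Finset.sum_singleton]
      have hwW : wE E ∈ W a₀.1 a₀.2 := hwEW E hE hPnonempty a₀ ha₀E
      rw [ha₀j] at hwW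
      have h3 := hbound j (htK j hj) a₀.2
        (by have := ((hmem𝔄 a₀).mp (hsubE a₀ ha₀E)).2; rwa [ha₀j] at this)
        x' hx' (wE E) hwW
      show v a₀.1 a₀.2 ≤ k x' (wE E)
      rw [ha₀j]
      exact h3
  -- numeric setup
  obtain ⟨ε, hε0, hεc'⟩ := ENNReal.lt_iff_exists_add_pos_lt.mp hcc'
  have hεne : (ε : ℝ≥0∞) ≠ 0 := by exact_mod_cast hε0.ne'
  set SB : ℝ≥0∞ := ∑ a ∈ 𝔄, vv a with hSB
  have hSBne : SB ≠ ⊤ :=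
    (ENNReal.sum_lt_top.mpr fun a ha => lt_top_iff_ne_top.mpr (hvvne a ha)).ne
  set Dtot : ℝ≥0∞ := (pow.card : ℝ≥0∞) * SB with hDtot
  have hDtotne : Dtot ≠ ⊤ := ENNReal.mul_ne_top (natCast_ne_top _) hSBne
  obtain ⟨M, hM⟩ := ENNReal.exists_nat_gt (show Dtot / (ε : ℝ≥0∞) ≠ ⊤ from
    (ENNReal.div_lt_top hDtotne hεne).ne)
  set N : ℕ := max M 1 with hN
  have hN1 : 1 ≤ N := le_max_right _ _
  have hNne0 : (N : ℝ≥0∞) ≠ 0 := by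
    simp only [ne_eq, Nat.cast_eq_zero]
    omega
  have hNnetop : (N : ℝ≥0∞) ≠ ⊤ := natCast_ne_top _
  have hDN : Dtot / (N : ℝ≥0∞) ≤ (ε : ℝ≥0∞) := by
    rw [ENNReal.div_le_iff_le_mul (Or.inl hNne0) (Or.inl hNnetop)]
    calc Dtot = Dtot / (ε : ℝ≥0∞) * ε := (ENNReal.div_mul_cancel hεne coe_ne_top).symm
      _ ≤ (M : ℝ≥0∞) * ε := mul_le_mul_left hM.le _
      _ ≤ (N : ℝ≥0∞) * ε := by
          refine mul_le_mul_left ?_ _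
          exact_mod_cast le_max_left M 1
      _ = (ε : ℝ≥0∞) * N := mul_comm _ _
  set m : Finset (X × ℝ≥0) → ℕ := fun E => ⌊(μ (P E)).toReal * N⌋₊ with hm
  have hm1 : ∀ E, μ (P E) ≤ ((m E : ℝ≥0∞) + 1) / (N : ℝ≥0∞) := by
    intro E
    rw [ENNReal.le_div_iff_mul_le (Or.inl hNne0) (Or.inl hNnetop)]
    have hfin1 : μ (P E) * (N : ℝ≥0∞) ≠ ⊤ := ENNReal.mul_ne_top (measure_ne_top μ _) hNnetop
    have hfin2 : ((m E : ℝ≥0∞) + 1) ≠ ⊤ := by simp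
    rw [← ENNReal.toReal_le_toReal hfin1 hfin2]
    rw [ENNReal.toReal_mul]
    rw [ENNReal.toReal_add (natCast_ne_top _) one_ne_top]
    simp only [ENNReal.toReal_natCast, ENNReal.toReal_one]
    exact (Nat.lt_floor_add_one _).le
  have hm0 : ∀ E, μ (P E) = 0 → m E = 0 := by
    intro E h
    rw [hm]
    simp [h]
  have hmN : ∑ E ∈ pow, m E ≤ N := by
    have h1 : ∑ E ∈ pow, ((m E : ℝ)) ≤ ∑ E ∈ pow, (μ (P E)).toReal * N :=
      Finset.sum_le_sum fun E _ => Nat.floor_le (by positivity)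
    have h2 : ∑ E ∈ pow, (μ (P E)).toReal * (N:ℝ) = (∑ E ∈ pow, (μ (P E)).toReal) * N :=
      (Finset.sum_mul _ _ _).symm
    have h3 : ∑ E ∈ pow, (μ (P E)).toReal = (∑ E ∈ pow, μ (P E)).toReal :=
      (ENNReal.toReal_sum fun E _ => measure_ne_top μ _).symm
    have h4 : (∑ E ∈ pow, μ (P E)).toReal ≤ 1 := by
      have := ENNReal.toReal_mono one_ne_top hsumP
      simpa using this
    have h5 : ∑ E ∈ pow, ((m E : ℝ)) ≤ N := by
      rw [h2, h3] at h1
      calc ∑ E ∈ pow, ((m E : ℝ)) ≤ (∑ E ∈ pow, μ (P E)).toReal * N := h1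
        _ ≤ 1 * N := by
            refine mul_le_mul_of_nonneg_right h4 ?_
            positivity
        _ = N := one_mul _
    have h6 : ((∑ E ∈ pow, m E : ℕ) : ℝ) ≤ (N : ℝ) := by push_cast; exact h5
    exact_mod_cast h6
  -- the per-patch discrete value
  set q : X → ℝ≥0∞ := fun j => (∑ E ∈ pow, (m E : ℝ≥0∞) * gval j E) / (N : ℝ≥0∞) with hq
  have hgvalSB : ∀ j, ∀ E ∈ pow, gval j E ≤ SB := by
    intro j E hE
    refine Finset.sum_le_sum_of_subset ?_
    intro a ha
    exact Finset.mem_powerset.mp hE ((Finset.mem_filter.mp ha).1)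
  have hcq : ∀ j ∈ t, c < q j := by
    intro j hj
    have hG : c' < ∑ E ∈ pow, μ (P E) * gval j E := hmain j hj
    have hGle : (∑ E ∈ pow, μ (P E) * gval j E) ≤ q j + ε := by
      calc ∑ E ∈ pow, μ (P E) * gval j E
          ≤ ∑ E ∈ pow, (((m E : ℝ≥0∞) + 1) / N) * gval j E :=
            Finset.sum_le_sum fun E _ => mul_le_mul_left (hm1 E) _
        _ = ∑ E ∈ pow, ((m E : ℝ≥0∞) * gval j E * (N : ℝ≥0∞)⁻¹ + gval j E * (N:ℝ≥0∞)⁻¹) := by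
            refine Finset.sum_congr rfl fun E _ => ?_
            simp only [div_eq_mul_inv]
            ring
        _ = (∑ E ∈ pow, (m E : ℝ≥0∞) * gval j E) * (N:ℝ≥0∞)⁻¹
            + (∑ E ∈ pow, gval j E) * (N:ℝ≥0∞)⁻¹ := by
            rw [Finset.sum_add_distrib, Finset.sum_mul, Finset.sum_mul]
        _ ≤ q j + ε := by
            refine add_le_add ?_ ?_
            · rw [hq]
              simp only [div_eq_mul_inv]
              exact le_refl _
            · calc (∑ E ∈ pow, gval j E) * (N:ℝ≥0∞)⁻¹
                  ≤ (pow.card • SB) * (N:ℝ≥0∞)⁻¹ :=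
                    mul_le_mul_left (Finset.sum_le_card_nsmul _ _ _ (hgvalSB j)) _
                _ = Dtot / N := by rw [hDtot, nsmul_eq_mul, div_eq_mul_inv]
                _ ≤ ε := hDN
    have : c + ε < q j + ε := hεc'.trans_le (hG.le.trans hGle)
    exact (ENNReal.add_lt_add_iff_right coe_ne_top).mp this
  -- build the tuple of points
  set w₀ : X := hLne.choose with hw₀
  have hw₀L : w₀ ∈ L := hLne.choose_spec
  set ℓ₀ : List X := (pow.toList.map (fun E => List.replicate (m E) (wE E))).flatten with hℓ₀
  set ℓ : List X := ℓ₀ ++ List.replicate (N - ℓ₀.length) w₀ with hℓ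
  have hlen0 : ℓ₀.length = ∑ E ∈ pow, m E := by
    rw [hℓ₀, List.length_flatten, List.map_map]
    have : (List.length ∘ fun E => List.replicate (m E) (wE E)) = fun E => m E := by
      funext E
      simp
    rw [this]
    exact Finset.sum_map_toList _ _
  have hlen0N : ℓ₀.length ≤ N := hlen0 ▸ hmN
  have hlen : ℓ.length = N := by
    rw [hℓ, List.length_append, List.length_replicate]
    omega
  set w' : Fin N → X := fun i => ℓ.get (Fin.cast hlen.symm i) with hw'
  have hw'L : ∀ i, w' i ∈ L := by
    intro i
    have hmem : w' i ∈ ℓ := List.mem_iff_get.mpr ⟨_, rfl⟩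
    rw [hℓ] at hmem
    rcases List.mem_append.mp hmem with h | h
    · rw [hℓ₀] at h
      obtain ⟨l, hl, hzl⟩ := List.mem_flatten.mp h
      obtain ⟨E, hE, rfl⟩ := List.mem_map.mp hl
      have := List.eq_of_mem_replicate hzl
      rw [this]
      exact hwEL E
    · rw [List.eq_of_mem_replicate h]
      exact hw₀L
  -- lower bound for the sum over the tuple
  have hwsum : ∀ x', ∀ j ∈ t, x' ∈ V j →
      (∑ E ∈ pow, (m E : ℝ≥0∞) * gval j E) ≤ ∑ i : Fin N, k x' (w' i) := by
    intro x' j hj hx'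
    have e1 : ∑ i : Fin N, k x' (w' i) = ∑ i : Fin ℓ.length, k x' (ℓ.get i) := by
      refine Fintype.sum_equiv (finCongr hlen.symm) _ _ fun i => rfl
    have e2 : ∑ i : Fin ℓ.length, k x' (ℓ.get i) = (ℓ.map (k x')).sum := by
      have := Fin.sum_univ_fun_getElem ℓ (k x')
      convert this using 2
      rfl
    have e3 : (ℓ.map (k x')).sum = (ℓ₀.map (k x')).sum
        + ((List.replicate (N - ℓ₀.length) w₀).map (k x')).sum := by
      rw [hℓ, List.map_append, List.sum_append]
    have e4 : (ℓ₀.map (k x')).sum = ∑ E ∈ pow, m E • k x' (wE E) := by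
      rw [hℓ₀, List.map_flatten, List.map_map]
      rw [List.sum_flatten, List.map_map]
      have : (List.sum ∘ (List.map (k x') ∘ fun E => List.replicate (m E) (wE E)))
          = fun E => m E • k x' (wE E) := by
        funext E
        simp [List.map_replicate, List.sum_replicate]
      rw [this]
      exact Finset.sum_map_toList _ _
    have e5 : ∑ E ∈ pow, (m E : ℝ≥0∞) * gval j E ≤ ∑ E ∈ pow, m E • k x' (wE E) := by
      refine Finset.sum_le_sum fun E hE => ?_
      rw [nsmul_eq_mul]
      by_cases hPE : μ (P E) = 0
      · rw [hm0 E hPE]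
        simp
      · exact mul_le_mul_right (hkey E hE hPE j hj x' hx') _
    calc ∑ E ∈ pow, (m E : ℝ≥0∞) * gval j E ≤ ∑ E ∈ pow, m E • k x' (wE E) := e5
      _ = (ℓ₀.map (k x')).sum := e4.symm
      _ ≤ (ℓ.map (k x')).sum := by rw [e3]; exact le_self_add
      _ = ∑ i : Fin ℓ.length, k x' (ℓ.get i) := e2.symm
      _ = ∑ i : Fin N, k x' (w' i) := e1.symm
  -- conclude
  have htne : t.Nonempty := by
    obtain ⟨x₀, hx₀⟩ := hKne
    obtain ⟨j, hj, _⟩ := hcov x₀ hx₀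
    exact ⟨j, hj⟩
  obtain ⟨j₀, hj₀t, hj₀min⟩ := t.exists_min_image q htne
  have hfinal : c < ⨅ x ∈ K, (∑ i : Fin N, k x (w' i)) / (N : ℝ≥0∞) := by
    refine lt_of_lt_of_le (hcq j₀ hj₀t) (le_iInf₂ fun x hx => ?_)
    obtain ⟨j, hj, hxVj⟩ := hcov x hx
    calc q j₀ ≤ q j := hj₀min j hj
      _ ≤ (∑ i : Fin N, k x (w' i)) / (N : ℝ≥0∞) := by
          rw [hq]
          exact ENNReal.div_le_div_right (hwsum x j hj hxVj) _
  have hcheb : c < chebM k L K N := by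
    refine hfinal.trans_le ?_
    exact le_iSup₂ (f := fun (w : Fin N → X) (_ : ∀ j, w j ∈ L) =>
      ⨅ x ∈ K, (∑ i, k x (w i)) / (N : ℝ≥0∞)) w' hw'L
  have hNeq : N - 1 + 1 = N := Nat.succ_pred_eq_of_pos hN1
  calc c < chebM k L K N := hcheb
    _ = chebM k L K ((N - 1) + 1) := by rw [hNeq]
    _ ≤ ⨆ n : ℕ, chebM k L K (n + 1) := le_iSup (fun n => chebM k L K (n + 1)) (N - 1)

end OhtsukaAux

/-- Ohtsuka: For nonempty `L` and nonempty compact `K`, the Chebyshev constant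
of `K` relative to `L` equals the dual energy: `sup_{n ≥ 1} M_n(L,K) = q̲(L,K)`. -/
theorem ohtsuka_cheb_eq_qEnergyLow
    {X : Type*} [TopologicalSpace X] [LocallyCompactSpace X] [T2Space X]
    [MeasurableSpace X] [BorelSpace X]
    (k : X → X → ℝ≥0∞)
    (hk : LowerSemicontinuous fun p : X × X => k p.1 p.2)
    (hksymm : ∀ x y, k x y = k y x)
    (L K : Set X) (hLne : L.Nonempty) (hK : IsCompact K) (hKne : K.Nonempty) :
    (⨆ n : ℕ, chebM k L K (n + 1)) = qEnergyLow k L K := by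
  apply le_antisymm
  · exact iSup_le fun n => cheb_le_qLow hk L K n
  · show (⨆ μ ∈ M1 L, ⨅ x ∈ K, potential k μ x) ≤ _
    exact iSup₂_le fun μ hμ => qLow_le_sup_cheb hk L K hLne hK hKne μ hμ
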